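/- Let P_M ∈ ℝ^{M×M} be entrywise nonnegative with lim_{ν→∞} P_M^ν = (1/M)·1_M 1_Mᵀ, let B ∈ ℕ, N := MB, and define P := P_M ⊗ (1/B)·1_B 1_Bᵀ ∈ ℝ^{N×N}. Then: (i) lim_{ν→∞} P^ν = (1/N)·1_N 1_Nᵀ; (ii) the spectral norms satisfy ‖P‖₂ = ‖P_M‖₂, so ‖P_M‖₂ ≤ 1 implies ‖P‖₂ ≤ 1. (Lemma 10 / hierarchical-control lemma.) -/

import Mathlib

open Matrix Filter Topology Finset
open scoped Kronecker

noncomputable section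

/-- Euclidean norm of a finitely-indexed real vector. -/
def eunorm {ι : Type*} [Fintype ι] (x : ι → ℝ) : ℝ := Real.sqrt (x ⬝ᵥ x)

/-- `S`-weighted norm `‖x‖_S = √(xᵀ S x)`. -/
def wnorm {ι : Type*} [Fintype ι] (S : Matrix ι ι ℝ) (x : ι → ℝ) : ℝ :=
  Real.sqrt (x ⬝ᵥ S.mulVec x)

/-- Quadratic cost `J(x,z) = q·xᵀQx + 2(Cz+c)ᵀx`. -/
def cost {n : ℕ} (Q C : Matrix (Fin n) (Fin n) ℝ) (qi : ℝ) (ci : Fin n → ℝ)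
    (x z : Fin n → ℝ) : ℝ :=
  qi * (x ⬝ᵥ Q.mulVec x) + 2 * ((C.mulVec z + ci) ⬝ᵥ x)

/-- `xst` is the optimal-response map: for every `z`, `xst z` minimizes the cost over `X`. -/
def IsOptResp {n : ℕ} (X : Set (Fin n → ℝ)) (Q C : Matrix (Fin n) (Fin n) ℝ)
    (qi : ℝ) (ci : Fin n → ℝ) (xst : (Fin n → ℝ) → (Fin n → ℝ)) : Prop :=
  ∀ z, xst z ∈ X ∧ ∀ y ∈ X, cost Q C qi ci (xst z) z ≤ cost Q C qi ci y z

/-- Stacked optimal responses `x⋆(z) = (x^{1⋆}(z^1);…;x^{N⋆}(z^N))`. -/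
def extMap {n N : ℕ} (xstar : Fin N → (Fin n → ℝ) → (Fin n → ℝ))
    (z : Fin N × Fin n → ℝ) : Fin N × Fin n → ℝ :=
  fun p => xstar p.1 (fun j => z (p.1, j)) p.2

/-- Extended aggregation map `A_ν(z) = (P^ν ⊗ I_n) x⋆(z)`. -/
def aggMap {n N : ℕ} (P : Matrix (Fin N) (Fin N) ℝ) (ν : ℕ)
    (xstar : Fin N → (Fin n → ℝ) → (Fin n → ℝ)) (z : Fin N × Fin n → ℝ) :
    Fin N × Fin n → ℝ :=
  ((P ^ ν) ⊗ₖ (1 : Matrix (Fin n) (Fin n) ℝ)).mulVec (extMap xstar z)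

/-- The matrix `(1/N)·1_N 1_Nᵀ` with all entries `1/N`. -/
def avgMat (N : ℕ) : Matrix (Fin N) (Fin N) ℝ := Matrix.of fun _ _ => (N : ℝ)⁻¹

/-- Mean-field aggregation map `A(z) = ((1/N)·1 1ᵀ ⊗ I_n) x⋆(z)`. -/
def meanAgg {n N : ℕ} (xstar : Fin N → (Fin n → ℝ) → (Fin n → ℝ))
    (z : Fin N × Fin n → ℝ) : Fin N × Fin n → ℝ :=
  ((avgMat N) ⊗ₖ (1 : Matrix (Fin n) (Fin n) ℝ)).mulVec (extMap xstar z)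

/-- Maximum-row-sum matrix norm `‖A‖_∞`. -/
def rowSumNorm {N : ℕ} (A : Matrix (Fin N) (Fin N) ℝ) : ℝ := ⨆ i, ∑ j, |A i j|

/-- Spectral norm (ℓ²-operator norm) of a real matrix. -/
def specNorm {ι : Type*} [Fintype ι] [DecidableEq ι] (P : Matrix ι ι ℝ) : ℝ :=
  ‖LinearMap.toContinuousLinearMap (Matrix.toEuclideanLin P)‖

/-- Map `A_{m,m}(z) = (P^m ⊗ I_n) x⋆((P^m ⊗ I_n) z)`. -/
def halfAgg {n N : ℕ} (P : Matrix (Fin N) (Fin N) ℝ) (m : ℕ)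
    (xstar : Fin N → (Fin n → ℝ) → (Fin n → ℝ)) (z : Fin N × Fin n → ℝ) :
    Fin N × Fin n → ℝ :=
  ((P ^ m) ⊗ₖ (1 : Matrix (Fin n) (Fin n) ℝ)).mulVec
    (extMap xstar (((P ^ m) ⊗ₖ (1 : Matrix (Fin n) (Fin n) ℝ)).mulVec z))


section Aux
variable {ι : Type*} [Fintype ι] [DecidableEq ι]

lemma eunorm_apply' (A : Matrix ι ι ℝ) (v : ι → ℝ) :
    ‖(LinearMap.toContinuousLinearMap (Matrix.toEuclideanLin A))
      ((WithLp.equiv 2 (ι → ℝ)).symm v)‖ = Real.sqrt (∑ i, (A.mulVec v i) ^ 2) := by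
  rw [LinearMap.coe_toContinuousLinearMap', WithLp.equiv_symm_apply,
    Matrix.toEuclideanLin_apply_piLp_toLp,
    EuclideanSpace.norm_eq]
  congr 1
  refine Finset.sum_congr rfl fun i _ => ?_
  rw [PiLp.toLp_apply, Real.norm_eq_abs, sq_abs]

omit [DecidableEq ι] in
lemma eunorm_symm' (v : ι → ℝ) :
    ‖(WithLp.equiv 2 (ι → ℝ)).symm v‖ = Real.sqrt (∑ i, (v i) ^ 2) := by
  rw [EuclideanSpace.norm_eq]
  congr 1
  refine Finset.sum_congr rfl fun i _ => ?_
  rw [WithLp.equiv_symm_apply, PiLp.toLp_apply, Real.norm_eq_abs, sq_abs]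

lemma specNorm_le_of (A : Matrix ι ι ℝ) (C : ℝ) (hC : 0 ≤ C)
    (h : ∀ v : ι → ℝ, Real.sqrt (∑ i, (A.mulVec v i) ^ 2) ≤ C * Real.sqrt (∑ i, (v i) ^ 2)) :
    specNorm A ≤ C := by
  refine ContinuousLinearMap.opNorm_le_bound _ hC fun x => ?_
  have := h ((WithLp.equiv 2 (ι → ℝ)) x)
  rwa [← eunorm_apply', ← eunorm_symm', (WithLp.equiv 2 (ι → ℝ)).symm_apply_apply] at this

lemma le_specNorm (A : Matrix ι ι ℝ) (v : ι → ℝ) :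
    Real.sqrt (∑ i, (A.mulVec v i) ^ 2) ≤ specNorm A * Real.sqrt (∑ i, (v i) ^ 2) := by
  have := (LinearMap.toContinuousLinearMap (Matrix.toEuclideanLin A)).le_opNorm
    ((WithLp.equiv 2 (ι → ℝ)).symm v)
  rwa [eunorm_apply', eunorm_symm'] at this

lemma specNorm_nonneg (A : Matrix ι ι ℝ) : 0 ≤ specNorm A := norm_nonneg _

end Aux

/-- hierarchical-control lemma: if `P_M^ν → (1/M)·1 1ᵀ` entrywise and
`P := P_M ⊗ (1/B)·1 1ᵀ`, then `P^ν → (1/(MB))·1 1ᵀ` entrywise, the spectral norms of `P`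
and `P_M` coincide, and in particular `‖P_M‖₂ ≤ 1` implies `‖P‖₂ ≤ 1`. -/
theorem hierarchical_kronecker_lemma {M B : ℕ} (hM : 0 < M) (hB : 0 < B)
    (PM : Matrix (Fin M) (Fin M) ℝ) (hnn : ∀ i j, 0 ≤ PM i j)
    (hlim : ∀ i j, Tendsto (fun ν : ℕ => (PM ^ ν) i j) atTop (𝓝 ((M : ℝ)⁻¹))) :
    (∀ i j : Fin M × Fin B,
      Tendsto (fun ν : ℕ => ((PM ⊗ₖ avgMat B) ^ ν) i j) atTop
        (𝓝 (((M : ℝ) * (B : ℝ))⁻¹))) ∧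
    specNorm (PM ⊗ₖ avgMat B) = specNorm PM ∧
    (specNorm PM ≤ 1 → specNorm (PM ⊗ₖ avgMat B) ≤ 1) := by
  have hBR : (0:ℝ) < (B:ℝ) := by exact_mod_cast hB
  -- entry formula for the Kronecker product
  have hent : ∀ (Q : Matrix (Fin M) (Fin M) ℝ) (p q : Fin M × Fin B),
      (Q ⊗ₖ avgMat B) p q = Q p.1 q.1 * (B:ℝ)⁻¹ := by
    intro Q p q; rfl
  -- avgMat is idempotent
  have havg : avgMat B * avgMat B = avgMat B := by
    ext i j
    simp only [Matrix.mul_apply, avgMat, Matrix.of_apply, Finset.sum_const, Finset.card_univ,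
      Fintype.card_fin, nsmul_eq_mul]
    field_simp
  -- powers of the Kronecker product
  have hpow : ∀ ν : ℕ, (PM ⊗ₖ avgMat B) ^ (ν + 1) = (PM ^ (ν + 1)) ⊗ₖ avgMat B := by
    intro ν
    induction ν with
    | zero => simp [pow_one]
    | succ k ih =>
      rw [pow_succ, ih, ← Matrix.mul_kronecker_mul, havg, ← pow_succ]
  constructor
  · intro i j
    have h1 : Tendsto (fun ν : ℕ => (PM ^ ν) i.1 j.1 * (B:ℝ)⁻¹) atTop
        (𝓝 ((M:ℝ)⁻¹ * (B:ℝ)⁻¹)) := (hlim i.1 j.1).mul_const _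
    rw [mul_inv]
    refine Tendsto.congr' ?_ h1
    filter_upwards [Filter.eventually_ge_atTop 1] with ν hν
    obtain ⟨k, rfl⟩ := Nat.exists_eq_add_of_le hν
    rw [add_comm, hpow k, hent]
  · have key : specNorm (PM ⊗ₖ avgMat B) = specNorm PM := by
      have hupper : specNorm (PM ⊗ₖ avgMat B) ≤ specNorm PM := by
        refine specNorm_le_of _ _ (specNorm_nonneg _) fun z => ?_
        set s : Fin M → ℝ := fun j => ∑ b, z (j, b) with hs
        set w : Fin M → ℝ := fun j => (Real.sqrt B)⁻¹ * s j with hw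
        have hsqB : (0:ℝ) < Real.sqrt B := Real.sqrt_pos.mpr hBR
        have hmv : ∀ p : Fin M × Fin B,
            (PM ⊗ₖ avgMat B).mulVec z p = (B:ℝ)⁻¹ * PM.mulVec s p.1 := by
          intro p
          simp only [Matrix.mulVec, dotProduct, hent, Fintype.sum_prod_type, hs]
          rw [Finset.mul_sum]
          refine Finset.sum_congr rfl fun j _ => ?_
          rw [Finset.mul_sum, Finset.mul_sum]
          refine Finset.sum_congr rfl fun b _ => ?_
          ring
        have hw2 : ∀ i, PM.mulVec w i = (Real.sqrt B)⁻¹ * PM.mulVec s i := by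
          intro i
          simp only [Matrix.mulVec, dotProduct, hw, Finset.mul_sum]
          exact Finset.sum_congr rfl fun j _ => by ring
        have e1 : ∑ p : Fin M × Fin B, ((PM ⊗ₖ avgMat B).mulVec z p) ^ 2
            = ∑ i, (PM.mulVec w i) ^ 2 := by
          simp only [hmv, hw2, Fintype.sum_prod_type, Finset.sum_const,
            Finset.card_univ, Fintype.card_fin, nsmul_eq_mul]
          refine Finset.sum_congr rfl fun i _ => ?_
          have hsB : ((Real.sqrt B)⁻¹) ^ 2 = (B:ℝ)⁻¹ := by
            rw [← Real.sqrt_inv, Real.sq_sqrt (by positivity)]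
          rw [mul_pow, mul_pow, hsB]
          field_simp
        have e2 : ∑ j, (w j) ^ 2 ≤ ∑ p : Fin M × Fin B, (z p) ^ 2 := by
          rw [Fintype.sum_prod_type]
          refine Finset.sum_le_sum fun j _ => ?_
          have hcs : (∑ b, z (j, b)) ^ 2 ≤ (B:ℝ) * ∑ b, z (j, b) ^ 2 := by
            have := sq_sum_le_card_mul_sum_sq (s := (Finset.univ : Finset (Fin B)))
              (f := fun b => z (j, b))
            simpa [Finset.card_univ, Fintype.card_fin] using this
          have hwj : (w j) ^ 2 = (B:ℝ)⁻¹ * (s j) ^ 2 := by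
            rw [hw, mul_pow, ← Real.sqrt_inv, Real.sq_sqrt (by positivity)]
          rw [hwj, hs]
          calc (B:ℝ)⁻¹ * (∑ b, z (j, b)) ^ 2
              ≤ (B:ℝ)⁻¹ * ((B:ℝ) * ∑ b, z (j, b) ^ 2) :=
                mul_le_mul_of_nonneg_left hcs (by positivity)
            _ = ∑ b, z (j, b) ^ 2 := by field_simp
        calc Real.sqrt (∑ p : Fin M × Fin B, ((PM ⊗ₖ avgMat B).mulVec z p) ^ 2)
            = Real.sqrt (∑ i, (PM.mulVec w i) ^ 2) := by rw [e1]
          _ ≤ specNorm PM * Real.sqrt (∑ j, (w j) ^ 2) := le_specNorm PM w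
          _ ≤ specNorm PM * Real.sqrt (∑ p : Fin M × Fin B, (z p) ^ 2) :=
              mul_le_mul_of_nonneg_left (Real.sqrt_le_sqrt e2) (specNorm_nonneg _)
      have hlower : specNorm PM ≤ specNorm (PM ⊗ₖ avgMat B) := by
        refine specNorm_le_of _ _ (specNorm_nonneg _) fun v => ?_
        set z : Fin M × Fin B → ℝ := fun p => v p.1 with hz
        have hmv : ∀ p : Fin M × Fin B,
            (PM ⊗ₖ avgMat B).mulVec z p = PM.mulVec v p.1 := by
          intro p
          simp only [Matrix.mulVec, dotProduct, hent, Fintype.sum_prod_type, hz,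
            Finset.sum_const, Finset.card_univ, Fintype.card_fin, nsmul_eq_mul]
          refine Finset.sum_congr rfl fun j _ => ?_
          field_simp
        have hsqB : (0:ℝ) < Real.sqrt B := Real.sqrt_pos.mpr hBR
        have h1 : Real.sqrt (∑ p : Fin M × Fin B, ((PM ⊗ₖ avgMat B).mulVec z p) ^ 2)
            = Real.sqrt B * Real.sqrt (∑ i, (PM.mulVec v i) ^ 2) := by
          simp only [hmv, Fintype.sum_prod_type]
          rw [Finset.sum_comm, Finset.sum_const, Finset.card_univ, Fintype.card_fin,
            nsmul_eq_mul, Real.sqrt_mul (by positivity)]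
        have h2 : Real.sqrt (∑ p : Fin M × Fin B, (z p) ^ 2)
            = Real.sqrt B * Real.sqrt (∑ i, (v i) ^ 2) := by
          simp only [hz, Fintype.sum_prod_type]
          rw [Finset.sum_comm, Finset.sum_const, Finset.card_univ, Fintype.card_fin,
            nsmul_eq_mul, Real.sqrt_mul (by positivity)]
        have h3 := le_specNorm (PM ⊗ₖ avgMat B) z
        rw [h1, h2] at h3
        have h4 : Real.sqrt B * Real.sqrt (∑ i, (PM.mulVec v i) ^ 2)
            ≤ Real.sqrt B * (specNorm (PM ⊗ₖ avgMat B) * Real.sqrt (∑ i, (v i) ^ 2)) := by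
          calc Real.sqrt B * Real.sqrt (∑ i, (PM.mulVec v i) ^ 2)
              ≤ specNorm (PM ⊗ₖ avgMat B) * (Real.sqrt B * Real.sqrt (∑ i, (v i) ^ 2)) := h3
            _ = Real.sqrt B * (specNorm (PM ⊗ₖ avgMat B) * Real.sqrt (∑ i, (v i) ^ 2)) := by
                ring
        exact le_of_mul_le_mul_left h4 hsqB
      exact le_antisymm hupper hlower
    exact ⟨key, fun h => key.le.trans h⟩
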